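/- Let A be the PARS over the disjoint union ℕ ⊎ {a_n | n ∈ ℕ} whose probabilistic reductions are exactly: a_n → ⟨1/2 : a_{n+1}; 1/2 : 0⟩, a_n → ⟨1 : 2^n · n⟩, and n+1 → ⟨1 : n⟩, for every n ∈ ℕ (where k denotes the element of the ℕ-component). Then A is positively almost surely terminating (PAST), every element has only finitely many one-step reducts (A is finitely branching), but A is not strongly almost surely terminating: adh_A(a_0) = ∞. -/

import Mathlib

open scoped NNReal ENNReal

/-- A finite (probability) distribution on `A`: a finitely supported weight
function with total weight `1`. -/
structure FinDist (A : Type*) where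
  w : A →₀ ℝ≥0
  sum_one : w.sum (fun _ p => p) = 1

/-- Multidistributions on `A`: finite multisets of weighted elements `p:a`. -/
abbrev MD (A : Type*) := Multiset (ℝ≥0 × A)

namespace MD

/-- The total weight `|μ|` of a multidistribution. -/
def wt {A : Type*} (μ : MD A) : ℝ≥0 := (μ.map Prod.fst).sum

/-- Scalar multiplication `p·μ`. -/
def smul {A : Type*} (p : ℝ≥0) (μ : MD A) : MD A :=
  μ.map fun qa => (p * qa.1, qa.2)

/-- The expected value `E(f(μ)) = Σ_{p:a ∈ μ} p·f(a)`. -/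
def exp {A : Type*} (f : A → ℝ≥0) (μ : MD A) : ℝ≥0 :=
  (μ.map fun pa => pa.1 * f pa.2).sum

end MD

namespace FinDist

/-- The multidistribution associated with a finite distribution. -/
def toMD {A : Type*} (d : FinDist A) : MD A :=
  d.w.support.val.map fun a => (d.w a, a)

/-- The expected value `E(f(d)) = Σ_a d(a)·f(a)`. -/
def exp {A : Type*} (f : A → ℝ≥0) (d : FinDist A) : ℝ≥0 :=
  d.w.sum fun a p => p * f a

/-- Pushforward of a finite distribution along a map; this is
`overline(h(d))`, the collapse of the elementwise image of `d`. -/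
noncomputable def map {A B : Type*} (h : A → B) (d : FinDist A) : FinDist B :=
  ⟨Finsupp.mapDomain h d.w, by
    rw [Finsupp.sum_mapDomain_index (fun _ => rfl) (fun _ _ _ => rfl)]
    exact d.sum_one⟩

/-- The Dirac distribution. -/
noncomputable def dirac {A : Type*} (a : A) : FinDist A :=
  ⟨Finsupp.single a 1, by simp⟩

end FinDist

/-- A PARS over `A`: a set of probabilistic reductions `a → d`. -/
abbrev PARS (A : Type*) := A → FinDist A → Prop

/-- `a` is terminal (a normal form) if it has no reduction. -/
def PARS.Terminal {A : Type*} (P : PARS A) (a : A) : Prop := ∀ d, ¬ P a d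

/-- The probabilistic reduction relation `⇒_P` on multidistributions. -/
inductive PARS.Step {A : Type*} (P : PARS A) : MD A → MD A → Prop
  | term (a : A) : P.Terminal a → PARS.Step P {(1, a)} 0
  | rule (a : A) (d : FinDist A) : P a d → PARS.Step P {(1, a)} d.toMD
  | conv (n : ℕ) (p : Fin n → ℝ≥0) (μ ρ : Fin n → MD A) :
      (∑ i, p i) ≤ 1 → (∀ i, PARS.Step P (μ i) (ρ i)) →
      PARS.Step P (∑ i, MD.smul (p i) (μ i)) (∑ i, MD.smul (p i) (ρ i))

/-- An (infinite) reduction sequence of `P`. -/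
def PARS.RedSeq {A : Type*} (P : PARS A) (μs : ℕ → MD A) : Prop :=
  ∀ n, P.Step (μs n) (μs (n + 1))

/-- A reduction sequence of `P` starting from `μ`. -/
def PARS.RedSeqFrom {A : Type*} (P : PARS A) (μ : MD A) (μs : ℕ → MD A) : Prop :=
  μs 0 = μ ∧ P.RedSeq μs

/-- The expected derivation length `adl(⃗μ) = Σ_{n ≥ 1} |μ_n|`. -/
noncomputable def adl {A : Type*} (μs : ℕ → MD A) : ℝ≥0∞ :=
  ∑' n : ℕ, (MD.wt (μs (n + 1)) : ℝ≥0∞)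

/-- The expected derivation height `adh_P(a)`. -/
noncomputable def adh {A : Type*} (P : PARS A) (a : A) : ℝ≥0∞ :=
  ⨆ (μs : ℕ → MD A) (_ : P.RedSeqFrom {(1, a)} μs), adl μs

/-- Strong almost sure termination. -/
def PARS.SAST {A : Type*} (P : PARS A) : Prop := ∀ a, adh P a < ⊤

/-- Almost sure termination. -/
def PARS.AST {A : Type*} (P : PARS A) : Prop :=
  ∀ μs : ℕ → MD A, P.RedSeq μs →
    Filter.Tendsto (fun n => MD.wt (μs n)) Filter.atTop (nhds 0)

/-- `f` is a (probabilistic) ranking function for `P` with parameter `ε`. -/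
def PARS.Ranking {A : Type*} (P : PARS A) (ε : ℝ≥0) (f : A → ℝ≥0) : Prop :=
  ∀ a d, P a d → f a ≥ ε + FinDist.exp f d

section Aux
variable {A : Type*} [DecidableEq A]

lemma MD.exp_zero (f : A → ℝ≥0) : MD.exp f 0 = 0 := rfl

lemma MD.exp_add (f : A → ℝ≥0) (μ ν : MD A) :
    MD.exp f (μ + ν) = MD.exp f μ + MD.exp f ν := by
  simp [MD.exp]

lemma MD.exp_smul (f : A → ℝ≥0) (p : ℝ≥0) (μ : MD A) :
    MD.exp f (MD.smul p μ) = p * MD.exp f μ := by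
  simp [MD.exp, MD.smul, Multiset.map_map, Function.comp, mul_assoc, Multiset.sum_map_mul_left]

def MD.expHom (f : A → ℝ≥0) : MD A →+ ℝ≥0 where
  toFun := MD.exp f
  map_zero' := rfl
  map_add' := MD.exp_add f

lemma MD.exp_sum (f : A → ℝ≥0) {n : ℕ} (g : Fin n → MD A) :
    MD.exp f (∑ i, g i) = ∑ i, MD.exp f (g i) :=
  map_sum (MD.expHom f) g Finset.univ

lemma MD.exp_single (f : A → ℝ≥0) (p : ℝ≥0) (a : A) :
    MD.exp f {(p, a)} = p * f a := by
  simp [MD.exp]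

lemma MD.exp_toMD (f : A → ℝ≥0) (d : FinDist A) :
    MD.exp f d.toMD = d.exp f := by
  rw [MD.exp, FinDist.toMD, Multiset.map_map]
  rfl

lemma MD.wt_eq_exp (μ : MD A) : μ.wt = MD.exp (fun _ => 1) μ := by
  simp [MD.wt, MD.exp]

lemma FinDist.exp_of_pair (d : FinDist A) (y₁ y₂ : A) (h12 : y₁ ≠ y₂) (p q : ℝ≥0)
    (hw : ∀ y, d.w y = if y = y₁ then p else if y = y₂ then q else 0) (f : A → ℝ≥0) :
    d.exp f = p * f y₁ + q * f y₂ := by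
  have hd : d.w = Finsupp.single y₁ p + Finsupp.single y₂ q := by
    ext y
    rw [hw y]
    rcases eq_or_ne y y₁ with rfl | h1
    · simp [Finsupp.single_apply, Ne.symm h12]
    · rcases eq_or_ne y y₂ with rfl | h2
      · simp [Finsupp.single_apply, h1, Ne.symm h1]
      · simp [Finsupp.single_apply, Ne.symm h1, Ne.symm h2, h1, h2]
  rw [FinDist.exp, hd, Finsupp.sum_add_index (by simp) (by intro a _ b₁ b₂; ring)]
  rw [Finsupp.sum_single_index (by simp), Finsupp.sum_single_index (by simp)]

lemma FinDist.exp_of_single (d : FinDist A) (y₁ : A) (p : ℝ≥0)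
    (hw : ∀ y, d.w y = if y = y₁ then p else 0) (f : A → ℝ≥0) :
    d.exp f = p * f y₁ := by
  have hd : d.w = Finsupp.single y₁ p := by
    ext y; rw [hw y, Finsupp.single_apply]
    rcases eq_or_ne y y₁ with rfl | h1
    · simp
    · simp [h1, Ne.symm h1]
  rw [FinDist.exp, hd, Finsupp.sum_single_index (by simp)]

end Aux


section Two
local notation "S" => (ℕ ⊕ ℕ)

def Lf : S → ℝ≥0 := Sum.elim (fun k => (k : ℝ≥0)) (fun _ => 0)
def Rf : S → ℝ≥0 := Sum.elim (fun _ => 0) (fun _ => 1)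
def lf : S → ℝ≥0 := Sum.elim (fun _ => 1) (fun _ => 0)
def Bf : S → ℝ≥0 := Sum.elim (fun _ => 0) (fun n => 2 ^ n * n)
def Ef : S → ℝ≥0 := Sum.elim (fun _ => 0) (fun n => 2 ^ n)

def cntR (μ : MD S) : ℕ := Multiset.countP (fun pa => pa.2.isRight = true) μ

lemma cntR_zero : cntR 0 = 0 := rfl

lemma cntR_add (μ ν : MD S) : cntR (μ + ν) = cntR μ + cntR ν :=
  Multiset.countP_add _ μ ν

def cntRHom : MD S →+ ℕ where
  toFun := cntR
  map_zero' := rfl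
  map_add' := cntR_add

lemma cntR_smul (p : ℝ≥0) (μ : MD S) : cntR (MD.smul p μ) = cntR μ := by
  rw [cntR, MD.smul, Multiset.countP_map, cntR]
  rw [Multiset.countP_eq_card_filter]

lemma cntR_sum {n : ℕ} (g : Fin n → MD S) :
    cntR (∑ i, g i) = ∑ i, cntR (g i) :=
  map_sum cntRHom g Finset.univ

lemma cntR_single (p : ℝ≥0) (a : S) : cntR {(p, a)} = if a.isRight = true then 1 else 0 := by
  show Multiset.countP _ ((p,a) ::ₘ 0) = _
  rw [Multiset.countP_cons, Multiset.countP_zero, zero_add]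

lemma cntR_toMD (d : FinDist S) :
    cntR d.toMD = (d.w.support.filter (fun a => a.isRight = true)).card := by
  rw [cntR, FinDist.toMD, Multiset.countP_map]
  rfl

variable {P : PARS S}
variable (hP : ∀ (a : S) (d : FinDist S), P a d ↔
      (∃ n : ℕ, a = Sum.inr n ∧ ∀ y, d.w y =
        if y = Sum.inr (n + 1) then 1 / 2 else if y = Sum.inl 0 then 1 / 2 else 0) ∨
      (∃ n : ℕ, a = Sum.inr n ∧ ∀ y, d.w y =
        if y = Sum.inl (2 ^ n * n) then 1 else 0) ∨
      (∃ n : ℕ, a = Sum.inl (n + 1) ∧ ∀ y, d.w y =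
        if y = Sum.inl n then 1 else 0))

include hP

lemma step_cntR {μ ρ : MD S} (h : P.Step μ ρ) : cntR ρ ≤ cntR μ := by
  induction h with
  | term a _ => simp [cntR_zero]
  | rule a d hd =>
    rcases (hP a d).1 hd with ⟨n, rfl, hw⟩ | ⟨n, rfl, hw⟩ | ⟨n, rfl, hw⟩
    · rw [cntR_toMD, cntR_single]
      simp only [Sum.isRight_inr, if_true]
      have : d.w.support.filter (fun a => a.isRight = true) ⊆ {Sum.inr (n+1)} := by
        intro a ha
        simp only [Finset.mem_filter, Finsupp.mem_support_iff] at ha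
        rcases ha with ⟨hne, hr⟩
        rw [hw a] at hne
        split_ifs at hne with h1 h2
        · simp [h1]
        · simp [h2] at hr
        · simp at hne
      calc _ ≤ ({Sum.inr (n+1)} : Finset S).card := Finset.card_le_card this
        _ = 1 := rfl
    · rw [cntR_toMD]
      have : d.w.support.filter (fun a => a.isRight = true) = ∅ := by
        apply Finset.filter_eq_empty_iff.2
        intro a ha
        simp only [Finsupp.mem_support_iff] at ha
        rw [hw a] at ha
        split_ifs at ha with h1
        · simp [h1]
        · simp at ha
      simp [this]
    · rw [cntR_toMD]
      have : d.w.support.filter (fun a => a.isRight = true) = ∅ := by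
        apply Finset.filter_eq_empty_iff.2
        intro a ha
        simp only [Finsupp.mem_support_iff] at ha
        rw [hw a] at ha
        split_ifs at ha with h1
        · simp [h1]
        · simp at ha
      simp [this]
  | conv n p μ ρ hple hsteps ih =>
    rw [cntR_sum, cntR_sum]
    apply Finset.sum_le_sum
    intro i _
    rw [cntR_smul, cntR_smul]
    exact ih i

omit hP in
lemma half_half : (2⁻¹ : ℝ≥0) + 2⁻¹ = 1 := by
  rw [← two_mul, mul_inv_cancel₀]
  norm_num

omit hP in
lemma cntR_toMD_zero (d : FinDist S) (hall : ∀ a : S, d.w a ≠ 0 → ∃ k, a = Sum.inl k) :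
    cntR d.toMD = 0 := by
  rw [cntR_toMD]
  have : d.w.support.filter (fun a => a.isRight = true) = ∅ := by
    apply Finset.filter_eq_empty_iff.2
    intro a ha
    simp only [Finsupp.mem_support_iff] at ha
    rcases hall a ha with ⟨k, rfl⟩
    simp
  simp [this]

lemma step_half {μ ρ : MD S} (h : P.Step μ ρ) :
    MD.exp Rf ρ + MD.exp Rf ρ ≤ MD.exp Rf μ := by
  induction h with
  | term a _ => simp [MD.exp_zero]
  | rule a d hd =>
    rcases (hP a d).1 hd with ⟨n, rfl, hw⟩ | ⟨n, rfl, hw⟩ | ⟨n, rfl, hw⟩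
    · rw [MD.exp_toMD, d.exp_of_pair _ _ (by simp) _ _ hw, MD.exp_single]
      simp [Rf]
      rw [half_half]
    · rw [MD.exp_toMD, d.exp_of_single _ _ hw, MD.exp_single]
      simp [Rf]
    · rw [MD.exp_toMD, d.exp_of_single _ _ hw, MD.exp_single]
      simp [Rf]
  | conv n p μ ρ hple hsteps ih =>
    simp only [MD.exp_sum, MD.exp_smul, ← Finset.sum_add_distrib]
    apply Finset.sum_le_sum
    intro i _
    rw [← mul_add]
    exact mul_le_mul_right (ih i) _

lemma step_E {μ ρ : MD S} (h : P.Step μ ρ) :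
    MD.exp Ef ρ ≤ MD.exp Ef μ := by
  induction h with
  | term a _ => simp [MD.exp_zero]
  | rule a d hd =>
    rcases (hP a d).1 hd with ⟨n, rfl, hw⟩ | ⟨n, rfl, hw⟩ | ⟨n, rfl, hw⟩
    · rw [MD.exp_toMD, d.exp_of_pair _ _ (by simp) _ _ hw, MD.exp_single]
      simp [Ef, pow_succ]
      apply le_of_eq
      rw [mul_comm, mul_assoc, mul_inv_cancel₀ (two_ne_zero), mul_one]
    · rw [MD.exp_toMD, d.exp_of_single _ _ hw, MD.exp_single]
      simp [Ef]
    · rw [MD.exp_toMD, d.exp_of_single _ _ hw, MD.exp_single]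
      simp [Ef]
  | conv n p μ ρ hple hsteps ih =>
    simp only [MD.exp_sum, MD.exp_smul]
    exact Finset.sum_le_sum fun i _ => mul_le_mul_right (ih i) _

lemma step_B {μ ρ : MD S} (h : P.Step μ ρ) :
    MD.exp Bf ρ ≤ MD.exp Bf μ + MD.exp Ef μ := by
  induction h with
  | term a _ => simp [MD.exp_zero]
  | rule a d hd =>
    rcases (hP a d).1 hd with ⟨n, rfl, hw⟩ | ⟨n, rfl, hw⟩ | ⟨n, rfl, hw⟩
    · rw [MD.exp_toMD, d.exp_of_pair _ _ (by simp) _ _ hw, MD.exp_single, MD.exp_single]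
      simp [Bf, Ef, pow_succ]
      apply le_of_eq
      push_cast
      rw [show ((2:ℝ≥0) ^ n * 2 * (↑n + 1)) = 2 * (2 ^ n * (↑n + 1)) by ring,
        ← mul_assoc, inv_mul_cancel₀ (G₀ := ℝ≥0) two_ne_zero, one_mul]
      ring
    · rw [MD.exp_toMD, d.exp_of_single _ _ hw, MD.exp_single]
      simp [Bf, Ef]
    · rw [MD.exp_toMD, d.exp_of_single _ _ hw, MD.exp_single]
      simp [Bf, Ef]
  | conv n p μ ρ hple hsteps ih =>
    simp only [MD.exp_sum, MD.exp_smul, ← Finset.sum_add_distrib]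
    apply Finset.sum_le_sum
    intro i _
    rw [← mul_add]
    exact mul_le_mul_right (ih i) _

lemma step_main1 {μ ρ : MD S} (h : P.Step μ ρ) :
    MD.exp Lf ρ + MD.exp lf ρ ≤ MD.exp Lf μ + MD.exp Rf μ + MD.exp Bf μ := by
  induction h with
  | term a _ => simp [MD.exp_zero]
  | rule a d hd =>
    rcases (hP a d).1 hd with ⟨n, rfl, hw⟩ | ⟨n, rfl, hw⟩ | ⟨n, rfl, hw⟩
    · rw [MD.exp_toMD, MD.exp_toMD, d.exp_of_pair _ _ (by simp) _ _ hw,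
        d.exp_of_pair _ _ (by simp) _ _ hw]
      simp only [MD.exp_single]
      simp [Lf, lf, Rf, Bf]
      exact (le_self_add : (1:ℝ≥0) ≤ 1 + 2^n * n).trans
        (le_mul_of_one_le_left (zero_le) one_le_two)
    · rw [MD.exp_toMD, MD.exp_toMD, d.exp_of_single _ _ hw, d.exp_of_single _ _ hw]
      simp only [MD.exp_single]
      simp [Lf, lf, Rf, Bf]
      all_goals rw [add_comm]
    · rw [MD.exp_toMD, MD.exp_toMD, d.exp_of_single _ _ hw, d.exp_of_single _ _ hw]
      simp only [MD.exp_single]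
      simp [Lf, lf, Rf, Bf]
      all_goals rw [add_comm]
  | conv n p μ ρ hple hsteps ih =>
    simp only [MD.exp_sum, MD.exp_smul, ← Finset.sum_add_distrib]
    apply Finset.sum_le_sum
    intro i _
    rw [← mul_add, ← mul_add, ← mul_add]
    exact mul_le_mul_right (ih i) _

lemma step_main2 {μ ρ : MD S} (h : P.Step μ ρ) (hc : cntR ρ = cntR μ) :
    MD.exp Lf ρ + MD.exp lf ρ ≤ MD.exp Lf μ + MD.exp Rf μ := by
  induction h with
  | term a _ => simp [MD.exp_zero]
  | rule a d hd =>
    rcases (hP a d).1 hd with ⟨n, rfl, hw⟩ | ⟨n, rfl, hw⟩ | ⟨n, rfl, hw⟩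
    · rw [MD.exp_toMD, MD.exp_toMD, d.exp_of_pair _ _ (by simp) _ _ hw,
        d.exp_of_pair _ _ (by simp) _ _ hw]
      simp only [MD.exp_single]
      simp [Lf, lf, Rf]
    · exfalso
      rw [cntR_toMD_zero d (fun a ha => by
            rw [hw a] at ha
            split_ifs at ha with h1
            · exact ⟨_, h1⟩
            · simp at ha), cntR_single] at hc
      simp at hc
    · rw [MD.exp_toMD, MD.exp_toMD, d.exp_of_single _ _ hw, d.exp_of_single _ _ hw]
      simp only [MD.exp_single]
      simp [Lf, lf, Rf]
      all_goals rw [add_comm]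
  | conv n p μ ρ hple hsteps ih =>
    rw [cntR_sum, cntR_sum] at hc
    simp only [cntR_smul] at hc
    have hle : ∀ i ∈ Finset.univ, cntR (ρ i) ≤ cntR (μ i) :=
      fun i _ => step_cntR hP (hsteps i)
    have heq := (Finset.sum_eq_sum_iff_of_le hle).1 hc
    simp only [MD.exp_sum, MD.exp_smul, ← Finset.sum_add_distrib]
    apply Finset.sum_le_sum
    intro i _
    rw [← mul_add, ← mul_add]
    exact mul_le_mul_right (ih i (heq i (Finset.mem_univ i))) _

omit hP in
lemma geom_sum_le (T : ℕ) : (∑ t ∈ Finset.range T, (2⁻¹ : ℝ≥0) ^ t) ≤ 2 := by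
  have key : ∀ T : ℕ, (∑ t ∈ Finset.range T, (2⁻¹ : ℝ≥0) ^ t) + 2⁻¹ ^ T * 2 = 2 := by
    intro T
    induction T with
    | zero => simp
    | succ T ih =>
      rw [Finset.sum_range_succ, pow_succ]
      calc (∑ t ∈ Finset.range T, (2⁻¹:ℝ≥0) ^ t) + 2⁻¹ ^ T + 2⁻¹ ^ T * 2⁻¹ * 2
          = (∑ t ∈ Finset.range T, (2⁻¹:ℝ≥0) ^ t) + 2⁻¹ ^ T * (1 + 2⁻¹ * 2) := by ring
        _ = (∑ t ∈ Finset.range T, (2⁻¹:ℝ≥0) ^ t) + 2⁻¹ ^ T * 2 := by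
            rw [inv_mul_cancel₀ (G₀ := ℝ≥0) two_ne_zero]; norm_num
        _ = 2 := ih
  calc (∑ t ∈ Finset.range T, (2⁻¹ : ℝ≥0) ^ t)
      ≤ (∑ t ∈ Finset.range T, (2⁻¹ : ℝ≥0) ^ t) + 2⁻¹ ^ T * 2 := le_self_add
    _ = 2 := key T

variable {μs : ℕ → MD S}

lemma seq_I (hs : P.RedSeq μs) (t : ℕ) :
    MD.exp Rf (μs t) ≤ MD.exp Rf (μs 0) * 2⁻¹ ^ t := by
  induction t with
  | zero => simp
  | succ t ih =>
    have h2 := step_half hP (hs t)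
    have : MD.exp Rf (μs (t+1)) ≤ 2⁻¹ * MD.exp Rf (μs t) := by
      have := mul_le_mul_right h2 (2⁻¹ : ℝ≥0)
      rw [mul_add] at this
      calc MD.exp Rf (μs (t+1))
          = 2⁻¹ * MD.exp Rf (μs (t+1)) + 2⁻¹ * MD.exp Rf (μs (t+1)) := by
            rw [← mul_add, ← two_mul, ← mul_assoc, inv_mul_cancel₀ (G₀ := ℝ≥0) two_ne_zero,
              one_mul]
        _ ≤ 2⁻¹ * MD.exp Rf (μs t) := this
    calc MD.exp Rf (μs (t+1)) ≤ 2⁻¹ * MD.exp Rf (μs t) := this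
      _ ≤ 2⁻¹ * (MD.exp Rf (μs 0) * 2⁻¹ ^ t) := mul_le_mul_right ih _
      _ = MD.exp Rf (μs 0) * 2⁻¹ ^ (t+1) := by ring

lemma seq_Isum (hs : P.RedSeq μs) (T : ℕ) :
    (∑ t ∈ Finset.range T, MD.exp Rf (μs t)) ≤ MD.exp Rf (μs 0) * 2 := by
  calc (∑ t ∈ Finset.range T, MD.exp Rf (μs t))
      ≤ ∑ t ∈ Finset.range T, MD.exp Rf (μs 0) * 2⁻¹ ^ t :=
        Finset.sum_le_sum fun t _ => seq_I hP hs t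
    _ = MD.exp Rf (μs 0) * ∑ t ∈ Finset.range T, (2⁻¹:ℝ≥0) ^ t := by
        rw [Finset.mul_sum]
    _ ≤ MD.exp Rf (μs 0) * 2 := mul_le_mul_right (geom_sum_le T) _

lemma seq_E (hs : P.RedSeq μs) (t : ℕ) : MD.exp Ef (μs t) ≤ MD.exp Ef (μs 0) := by
  induction t with
  | zero => exact le_rfl
  | succ t ih => exact (step_E hP (hs t)).trans ih

lemma seq_B (hs : P.RedSeq μs) (t : ℕ) :
    MD.exp Bf (μs t) ≤ MD.exp Bf (μs 0) + t * MD.exp Ef (μs 0) := by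
  induction t with
  | zero => simp
  | succ t ih =>
    calc MD.exp Bf (μs (t+1)) ≤ MD.exp Bf (μs t) + MD.exp Ef (μs t) := step_B hP (hs t)
      _ ≤ (MD.exp Bf (μs 0) + t * MD.exp Ef (μs 0)) + MD.exp Ef (μs 0) :=
          add_le_add ih (seq_E hP hs t)
      _ = MD.exp Bf (μs 0) + (t + 1 : ℕ) * MD.exp Ef (μs 0) := by push_cast; ring

lemma seq_cnt (hs : P.RedSeq μs) {s t : ℕ} (h : s ≤ t) : cntR (μs t) ≤ cntR (μs s) := by
  induction t with
  | zero => rw [Nat.le_zero.1 h]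
  | succ t ih =>
    rcases Nat.lt_or_ge s (t+1) with hlt | hge
    · exact (step_cntR hP (hs t)).trans (ih (Nat.lt_succ_iff.1 hlt))
    · rw [Nat.le_antisymm h hge]

lemma past_partial (hs : P.RedSeq μs) {g : ℕ → ℝ≥0}
    (hkey : ∀ t, MD.exp Lf (μs (t+1)) + MD.exp lf (μs (t+1)) ≤
      MD.exp Lf (μs t) + MD.exp Rf (μs t) + g t) (T : ℕ) :
    (∑ t ∈ Finset.range T, MD.exp lf (μs (t+1))) + MD.exp Lf (μs T) ≤
      MD.exp Lf (μs 0) + ∑ t ∈ Finset.range T, (MD.exp Rf (μs t) + g t) := by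
  induction T with
  | zero => simp
  | succ T ih =>
    rw [Finset.sum_range_succ, Finset.sum_range_succ]
    calc (∑ t ∈ Finset.range T, MD.exp lf (μs (t+1))) + MD.exp lf (μs (T+1))
          + MD.exp Lf (μs (T+1))
        = (∑ t ∈ Finset.range T, MD.exp lf (μs (t+1)))
          + (MD.exp Lf (μs (T+1)) + MD.exp lf (μs (T+1))) := by ring
      _ ≤ (∑ t ∈ Finset.range T, MD.exp lf (μs (t+1)))
          + (MD.exp Lf (μs T) + MD.exp Rf (μs T) + g T) := add_le_add_right (hkey T) _
      _ = ((∑ t ∈ Finset.range T, MD.exp lf (μs (t+1))) + MD.exp Lf (μs T))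
          + (MD.exp Rf (μs T) + g T) := by ring
      _ ≤ (MD.exp Lf (μs 0) + ∑ t ∈ Finset.range T, (MD.exp Rf (μs t) + g t))
          + (MD.exp Rf (μs T) + g T) := add_le_add_left ih _
      _ = _ := by ring

lemma past_bound (hs : P.RedSeq μs) (a : S) (h0 : μs 0 = {(1, a)}) :
    ∃ C : ℝ≥0, ∀ T, (∑ t ∈ Finset.range T, MD.wt (μs (t+1))) ≤ C := by
  have hc0 : cntR (μs 0) ≤ 1 := by
    rw [h0, cntR_single]; split <;> norm_num
  -- obtain the defect function g
  obtain ⟨g, hkey, D, hD⟩ : ∃ g : ℕ → ℝ≥0,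
      (∀ t, MD.exp Lf (μs (t+1)) + MD.exp lf (μs (t+1)) ≤
        MD.exp Lf (μs t) + MD.exp Rf (μs t) + g t) ∧
      ∃ D : ℝ≥0, ∀ T, (∑ t ∈ Finset.range T, g t) ≤ D := by
    by_cases hall : ∀ t, cntR (μs (t+1)) = cntR (μs t)
    · refine ⟨fun _ => 0, ?_, 0, by simp⟩
      intro t
      rw [add_zero]
      exact step_main2 hP (hs t) (hall t)
    · push_neg at hall
      have hex : ∃ t, cntR (μs (t+1)) ≠ cntR (μs t) := hall
      classical
      set t₀ := Nat.find hex with ht₀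
      have hfind := Nat.find_spec hex
      have hzero : cntR (μs (t₀ + 1)) = 0 := by
        have h1 : cntR (μs (t₀+1)) ≤ cntR (μs t₀) := step_cntR hP (hs t₀)
        have h2 : cntR (μs t₀) ≤ cntR (μs 0) := seq_cnt hP hs (Nat.zero_le _)
        have h3 : cntR (μs (t₀+1)) < 1 :=
          lt_of_lt_of_le (lt_of_le_of_ne h1 hfind) (h2.trans hc0)
        exact Nat.lt_one_iff.1 h3
      refine ⟨fun t => if t = t₀ then MD.exp Bf (μs 0) + t₀ * MD.exp Ef (μs 0) else 0,
        ?_, MD.exp Bf (μs 0) + t₀ * MD.exp Ef (μs 0), ?_⟩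
      · intro t
        rcases eq_or_ne t t₀ with rfl | hne
        · simp only [if_pos rfl]
          calc MD.exp Lf (μs (t₀+1)) + MD.exp lf (μs (t₀+1))
              ≤ MD.exp Lf (μs t₀) + MD.exp Rf (μs t₀) + MD.exp Bf (μs t₀) :=
                step_main1 hP (hs t₀)
            _ ≤ _ := add_le_add_right (seq_B hP hs t₀) _
        · simp only [if_neg hne, add_zero]
          apply step_main2 hP (hs t)
          rcases Nat.lt_or_ge t t₀ with hlt | hge
          · exact not_not.1 (Nat.find_min hex hlt)
          · have hgt : t₀ + 1 ≤ t := lt_of_le_of_ne hge (Ne.symm hne)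
            have h1 : cntR (μs t) ≤ cntR (μs (t₀+1)) := seq_cnt hP hs hgt
            have h2 : cntR (μs (t+1)) ≤ cntR (μs t) := step_cntR hP (hs t)
            rw [hzero] at h1
            have e1 : cntR (μs t) = 0 := Nat.le_zero.1 h1
            have e2 : cntR (μs (t+1)) = 0 := Nat.le_zero.1 (h2.trans h1)
            rw [e1, e2]
      · intro T
        rw [Finset.sum_ite_eq' (Finset.range T) t₀]
        split <;> simp
  refine ⟨MD.exp Rf (μs 0) * 2 + (MD.exp Lf (μs 0) + (MD.exp Rf (μs 0) * 2 + D)), fun T => ?_⟩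
  have hwt : ∀ ν : MD S, MD.wt ν = MD.exp Rf ν + MD.exp lf ν := by
    intro ν
    rw [MD.wt_eq_exp, MD.exp, MD.exp, MD.exp, ← Multiset.sum_map_add]
    congr 1
    apply Multiset.map_congr rfl
    intro x _
    rcases x with ⟨p, a | n⟩ <;> simp [Rf, lf]
  calc (∑ t ∈ Finset.range T, MD.wt (μs (t+1)))
      = (∑ t ∈ Finset.range T, MD.exp Rf (μs (t+1)))
        + ∑ t ∈ Finset.range T, MD.exp lf (μs (t+1)) := by
        rw [← Finset.sum_add_distrib]
        exact Finset.sum_congr rfl fun t _ => hwt _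
    _ ≤ MD.exp Rf (μs 0) * 2 + (MD.exp Lf (μs 0) + (MD.exp Rf (μs 0) * 2 + D)) := by
        apply add_le_add
        · calc (∑ t ∈ Finset.range T, MD.exp Rf (μs (t+1)))
              ≤ ∑ t ∈ Finset.range (T+1), MD.exp Rf (μs t) := by
                rw [Finset.sum_range_succ']
                exact le_self_add
            _ ≤ _ := seq_Isum hP hs (T+1)
        · calc (∑ t ∈ Finset.range T, MD.exp lf (μs (t+1)))
              ≤ (∑ t ∈ Finset.range T, MD.exp lf (μs (t+1))) + MD.exp Lf (μs T) :=
                le_self_add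
            _ ≤ MD.exp Lf (μs 0) + ∑ t ∈ Finset.range T, (MD.exp Rf (μs t) + g t) :=
                past_partial hP hs hkey T
            _ ≤ MD.exp Lf (μs 0) + (MD.exp Rf (μs 0) * 2 + D) := by
                apply add_le_add_right
                rw [Finset.sum_add_distrib]
                exact add_le_add (seq_Isum hP hs T) (hD T)

omit hP in
lemma FinDist.w_inj {d e : FinDist S} (h : d.w = e.w) : d = e := by
  cases d; cases e; simpa using h

lemma branch_finite (a : S) : {d | P a d}.Finite := by
  classical
  rcases a with k | n
  · rcases k with _ | k
    · have : {d | P (Sum.inl 0) d} = ∅ := by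
        ext d
        simp only [Set.mem_setOf_eq, Set.mem_empty_iff_false, iff_false]
        intro hd
        rcases (hP _ _).1 hd with ⟨n, h, _⟩ | ⟨n, h, _⟩ | ⟨n, h, _⟩ <;> simp at h
      rw [this]; exact Set.finite_empty
    · apply Set.Subsingleton.finite
      intro d1 h1 d2 h2
      have w1 : ∀ y, d1.w y = if y = Sum.inl k then 1 else 0 := by
        rcases (hP _ _).1 h1 with ⟨n, h, _⟩ | ⟨n, h, _⟩ | ⟨n, h, hw⟩
        · simp at h
        · simp at h
        · obtain rfl : k = n := by simpa using h
          exact hw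
      have w2 : ∀ y, d2.w y = if y = Sum.inl k then 1 else 0 := by
        rcases (hP _ _).1 h2 with ⟨n, h, _⟩ | ⟨n, h, _⟩ | ⟨n, h, hw⟩
        · simp at h
        · simp at h
        · obtain rfl : k = n := by simpa using h
          exact hw
      exact FinDist.w_inj (Finsupp.ext fun y => (w1 y).trans (w2 y).symm)
  · have hsub : {d | P (Sum.inr n) d} ⊆
        {d : FinDist S | ∀ y, d.w y =
          if y = Sum.inr (n + 1) then 1 / 2 else if y = Sum.inl 0 then 1 / 2 else 0} ∪
        {d : FinDist S | ∀ y, d.w y = if y = Sum.inl (2 ^ n * n) then 1 else 0} := by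
      intro d hd
      rcases (hP _ _).1 hd with ⟨m, h, hw⟩ | ⟨m, h, hw⟩ | ⟨m, h, _⟩
      · obtain rfl : m = n := by simpa using h.symm
        exact Or.inl hw
      · obtain rfl : m = n := by simpa using h.symm
        exact Or.inr hw
      · simp at h
    apply Set.Finite.subset _ hsub
    apply Set.Finite.union <;>
      exact Set.Subsingleton.finite fun d1 h1 d2 h2 =>
        FinDist.w_inj (Finsupp.ext fun y => (h1 y).trans (h2 y).symm)


lemma past_adl (hs : P.RedSeq μs) (a : S) (h0 : μs 0 = {(1, a)}) :
    adl μs < ⊤ := by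
  obtain ⟨C, hC⟩ := past_bound hP hs a h0
  have : adl μs ≤ (C : ℝ≥0∞) := by
    rw [adl, ENNReal.tsum_eq_iSup_sum]
    apply iSup_le
    intro s
    calc (∑ n ∈ s, (MD.wt (μs (n+1)) : ℝ≥0∞))
        ≤ ∑ n ∈ Finset.range (s.sup id + 1), (MD.wt (μs (n+1)) : ℝ≥0∞) := by
          apply Finset.sum_le_sum_of_subset
          intro n hn
          rw [Finset.mem_range]
          exact Nat.lt_succ_of_le (Finset.le_sup (f := id) hn)
      _ = ((∑ n ∈ Finset.range (s.sup id + 1), MD.wt (μs (n+1))) : ℝ≥0) := by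
          rw [ENNReal.coe_finset_sum]
      _ ≤ (C : ℝ≥0∞) := ENNReal.coe_le_coe.2 (hC _)
  exact lt_of_le_of_lt this ENNReal.coe_lt_top

/-! ### Construction of the witnessing sequences -/

omit hP

noncomputable def singD (y : S) : FinDist S :=
  ⟨Finsupp.single y 1, by
    rw [Finsupp.sum_single_index]; rfl⟩

lemma singD_w (y : S) : ∀ z, (singD y).w z = if z = y then 1 else 0 := by
  intro z
  rcases eq_or_ne z y with rfl | h
  · simp [singD]
  · simp [singD, Finsupp.single_apply, h, Ne.symm h]

lemma singD_toMD (y : S) : (singD y).toMD = {(1, y)} := by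
  rw [FinDist.toMD]
  have : (singD y).w.support = {y} := Finsupp.support_single_ne_zero y one_ne_zero
  rw [this]
  simp [singD]

noncomputable def pairD (n : ℕ) : FinDist S :=
  ⟨Finsupp.single (Sum.inr (n+1)) 2⁻¹ + Finsupp.single (Sum.inl 0) 2⁻¹, by
    rw [Finsupp.sum_add_index (by simp) (by intro a _ b₁ b₂; rfl),
      Finsupp.sum_single_index rfl, Finsupp.sum_single_index rfl, half_half]⟩

lemma pairD_w (n : ℕ) : ∀ y, (pairD n).w y =
    if y = Sum.inr (n + 1) then 1 / 2 else if y = Sum.inl 0 then 1 / 2 else 0 := by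
  intro y
  rcases eq_or_ne y (Sum.inr (n+1)) with rfl | h1
  · simp [pairD, Finsupp.single_apply]
  · rcases eq_or_ne y (Sum.inl 0) with rfl | h2
    · simp [pairD, Finsupp.single_apply, Ne.symm h1]
    · simp [pairD, Finsupp.single_apply, h1, h2, Ne.symm h1, Ne.symm h2]

lemma pairD_toMD (n : ℕ) :
    (pairD n).toMD = {(2⁻¹, Sum.inr (n+1)), (2⁻¹, Sum.inl 0)} := by
  rw [FinDist.toMD]
  have hne : (Sum.inr (n+1) : S) ≠ Sum.inl 0 := by simp
  have hsup : (pairD n).w.support = {Sum.inr (n+1), Sum.inl 0} := by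
    rw [pairD]
    rw [Finsupp.support_add_eq, Finsupp.support_single_ne_zero _ (by norm_num),
      Finsupp.support_single_ne_zero _ (by norm_num)]
    · rfl
    · rw [Finsupp.support_single_ne_zero _ (by norm_num),
        Finsupp.support_single_ne_zero _ (by norm_num)]
      simp [hne]
  rw [hsup]
  have hv : ({Sum.inr (n+1), Sum.inl 0} : Finset S).val =
      (Sum.inr (n+1) : S) ::ₘ {Sum.inl 0} := by
    rfl
  rw [hv]
  rw [Multiset.map_cons, Multiset.map_singleton]
  have w1 : (pairD n).w (Sum.inr (n+1)) = 2⁻¹ := by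
    rw [pairD_w]; norm_num
  have w2 : (pairD n).w (Sum.inl 0) = 2⁻¹ := by
    rw [pairD_w]; norm_num
  rw [w1, w2]
  rfl

lemma smul_single (p q : ℝ≥0) (a : S) : MD.smul p {(q, a)} = {(p * q, a)} := by
  simp [MD.smul]

lemma smul_zero' (p : ℝ≥0) : MD.smul p (0 : MD S) = 0 := rfl

lemma step_zero : P.Step 0 0 := by
  have h := PARS.Step.conv (P := P) 0 (fun i => i.elim0) (fun i => i.elim0) (fun i => i.elim0)
    (by simp) (fun i => i.elim0)
  simpa using h

lemma step_smul {μ ρ : MD S} (p : ℝ≥0) (hp : p ≤ 1) (h : P.Step μ ρ) :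
    P.Step (MD.smul p μ) (MD.smul p ρ) := by
  have hc := PARS.Step.conv (P := P) 1 (fun _ => p) (fun _ => μ) (fun _ => ρ)
    (by simpa) (fun _ => h)
  simpa using hc

lemma step_pair {μ₁ ρ₁ μ₂ ρ₂ : MD S} (p q : ℝ≥0) (hpq : p + q ≤ 1)
    (h1 : P.Step μ₁ ρ₁) (h2 : P.Step μ₂ ρ₂) :
    P.Step (MD.smul p μ₁ + MD.smul q μ₂) (MD.smul p ρ₁ + MD.smul q ρ₂) := by
  have hc := PARS.Step.conv (P := P) 2 ![p, q] ![μ₁, μ₂] ![ρ₁, ρ₂]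
    (by simpa [Fin.sum_univ_two] using hpq)
    (by intro i; fin_cases i <;> simpa)
  simpa [Fin.sum_univ_two] using hc

include hP

lemma term_inl0 : P.Terminal (Sum.inl 0) := by
  intro d hd
  rcases (hP _ _).1 hd with ⟨n, h, _⟩ | ⟨n, h, _⟩ | ⟨n, h, _⟩ <;> simp at h

lemma st0 : P.Step {(1, Sum.inl 0)} 0 := PARS.Step.term _ (term_inl0 hP)

lemma st1 (n : ℕ) : P.Step {(1, Sum.inr n)} {(2⁻¹, Sum.inr (n+1)), (2⁻¹, Sum.inl 0)} := by
  have h := PARS.Step.rule (P := P) _ (pairD n) ((hP _ _).2 (Or.inl ⟨n, rfl, pairD_w n⟩))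
  rwa [pairD_toMD] at h

lemma st2 (n : ℕ) : P.Step {(1, Sum.inr n)} {(1, Sum.inl (2^n * n))} := by
  have h := PARS.Step.rule (P := P) _ (singD (Sum.inl (2^n*n)))
    ((hP _ _).2 (Or.inr (Or.inl ⟨n, rfl, singD_w _⟩)))
  rwa [singD_toMD] at h

lemma st3 (n : ℕ) : P.Step {(1, Sum.inl (n+1))} {(1, Sum.inl n)} := by
  have h := PARS.Step.rule (P := P) _ (singD (Sum.inl n))
    ((hP _ _).2 (Or.inr (Or.inr ⟨n, rfl, singD_w _⟩)))
  rwa [singD_toMD] at h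

omit hP

noncomputable def seqk (k : ℕ) : ℕ → MD S := fun t =>
  if t = 0 then {(1, Sum.inr 0)}
  else if t ≤ k then {((2⁻¹ : ℝ≥0) ^ t, Sum.inr t), ((2⁻¹ : ℝ≥0) ^ t, Sum.inl 0)}
  else if t ≤ k + 1 + 2 ^ k * k then
    {((2⁻¹ : ℝ≥0) ^ k, Sum.inl (2 ^ k * k - (t - (k + 1))))}
  else 0

lemma pow_half_le_one (t : ℕ) : ((2⁻¹ : ℝ≥0)) ^ t ≤ 1 :=
  pow_le_one₀ (zero_le) (by norm_num)

lemma two_pow_half_le_one {t : ℕ} (ht : 1 ≤ t) :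
    ((2⁻¹ : ℝ≥0)) ^ t + ((2⁻¹ : ℝ≥0)) ^ t ≤ 1 := by
  have h : ((2⁻¹ : ℝ≥0)) ^ t ≤ 2⁻¹ := by
    calc ((2⁻¹ : ℝ≥0)) ^ t ≤ 2⁻¹ ^ 1 :=
      pow_le_pow_of_le_one (zero_le) (by norm_num) ht
    _ = 2⁻¹ := pow_one _
  calc ((2⁻¹ : ℝ≥0)) ^ t + ((2⁻¹ : ℝ≥0)) ^ t ≤ 2⁻¹ + 2⁻¹ := add_le_add h h
    _ = 1 := half_half

include hP

omit hP in
lemma seqk_zero (k : ℕ) : seqk k 0 = {(1, Sum.inr 0)} := by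
  simp [seqk]

omit hP in
lemma seqk_mid (k t : ℕ) (h1 : 1 ≤ t) (h2 : t ≤ k) :
    seqk k t = {((2⁻¹ : ℝ≥0) ^ t, Sum.inr t), ((2⁻¹ : ℝ≥0) ^ t, Sum.inl 0)} := by
  simp only [seqk]
  rw [if_neg (by omega), if_pos h2]

omit hP in
lemma seqk_late (k t : ℕ) (h1 : k + 1 ≤ t) (h2 : t ≤ k + 1 + 2 ^ k * k) :
    seqk k t = {((2⁻¹ : ℝ≥0) ^ k, Sum.inl (2 ^ k * k - (t - (k + 1))))} := by
  simp only [seqk]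
  rw [if_neg (by omega), if_neg (by omega), if_pos h2]

omit hP in
lemma seqk_end (k t : ℕ) (h : k + 1 + 2 ^ k * k < t) : seqk k t = 0 := by
  simp only [seqk]
  rw [if_neg (by omega), if_neg (by omega), if_neg (by omega)]

lemma seqk_red (k : ℕ) : P.RedSeq (seqk k) := by
  intro t
  rcases Nat.eq_zero_or_pos t with rfl | htpos
  · rcases Nat.eq_zero_or_pos k with rfl | hkpos
    · rw [seqk_zero, seqk_late 0 1 (by omega) (by omega)]
      have h := st2 hP 0
      simpa using h
    · rw [seqk_zero, seqk_mid k 1 (by omega) (by omega)]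
      have h := st1 hP 0
      simpa using h
  · rcases Nat.lt_or_ge t k with htk | htk
    · -- 1 ≤ t < k : rule 1 + terminal
      rw [seqk_mid k t htpos (by omega), seqk_mid k (t+1) (by omega) (by omega)]
      have h := step_pair (p := (2⁻¹:ℝ≥0)^t) (q := (2⁻¹:ℝ≥0)^t)
        (two_pow_half_le_one htpos) (st1 hP t) (st0 hP)
      have hms : MD.smul ((2⁻¹:ℝ≥0)^t) {(2⁻¹, Sum.inr (t+1)), (2⁻¹, Sum.inl 0)} =
          {((2⁻¹:ℝ≥0)^(t+1), Sum.inr (t+1)), ((2⁻¹:ℝ≥0)^(t+1), Sum.inl 0)} := by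
        simp [MD.smul, pow_succ]
      rw [hms] at h
      simp only [smul_zero', smul_single, mul_one, add_zero] at h
      have hsplit : ({((2⁻¹:ℝ≥0)^t, Sum.inr t), ((2⁻¹:ℝ≥0)^t, Sum.inl 0)} : MD (ℕ ⊕ ℕ)) =
          {((2⁻¹:ℝ≥0)^t, Sum.inr t)} + {((2⁻¹:ℝ≥0)^t, Sum.inl 0)} := rfl
      rw [hsplit]
      exact h
    · rcases Nat.eq_or_lt_of_le htk with rfl | htgt
      · -- t = k ≥ 1 : rule 2 + terminal
        rw [seqk_mid k k htpos le_rfl, seqk_late k (k+1) le_rfl (by omega)]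
        have h := step_pair (p := (2⁻¹:ℝ≥0)^k) (q := (2⁻¹:ℝ≥0)^k)
          (two_pow_half_le_one htpos) (st2 hP k) (st0 hP)
        simp only [smul_zero', smul_single, mul_one, add_zero] at h
        have : k + 1 - (k + 1) = 0 := by omega
        rw [this, Nat.sub_zero]
        have hsplit : ({((2⁻¹:ℝ≥0)^k, Sum.inr k), ((2⁻¹:ℝ≥0)^k, Sum.inl 0)} : MD (ℕ ⊕ ℕ)) =
            {((2⁻¹:ℝ≥0)^k, Sum.inr k)} + {((2⁻¹:ℝ≥0)^k, Sum.inl 0)} := rfl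
        rw [hsplit]
        exact h
      · -- t > k
        by_cases hin : t ≤ k + 1 + 2 ^ k * k
        · by_cases hlast : t = k + 1 + 2 ^ k * k
          · -- final step: inl 0 disappears
            rw [seqk_late k t (by omega) hin, seqk_end k (t+1) (by omega)]
            have hz : 2 ^ k * k - (t - (k + 1)) = 0 := by omega
            rw [hz]
            have h := step_smul ((2⁻¹:ℝ≥0)^k) (pow_half_le_one k) (st0 hP)
            simp only [smul_zero', smul_single, mul_one] at h
            exact h
          · -- middle: inl (m+1) → inl m
            rw [seqk_late k t (by omega) hin, seqk_late k (t+1) (by omega) (by omega)]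
            have hm : 2 ^ k * k - (t - (k + 1)) = (2 ^ k * k - (t + 1 - (k + 1))) + 1 := by
              omega
            rw [hm]
            have h := step_smul ((2⁻¹:ℝ≥0)^k) (pow_half_le_one k)
              (st3 hP (2 ^ k * k - (t + 1 - (k + 1))))
            simp only [smul_single, mul_one] at h
            exact h
        · rw [seqk_end k t (by omega), seqk_end k (t+1) (by omega)]
          exact step_zero

omit hP in
lemma wt_single (c : ℝ≥0) (x : S) : MD.wt {(c, x)} = c := by
  simp [MD.wt]

omit hP in
lemma nnreal_k_le (k : ℕ) :
    (k : ℝ≥0) ≤ ((2 ^ k * k + 1 : ℕ) : ℝ≥0) * 2⁻¹ ^ k := by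
  have h1 : ((2:ℝ≥0)) ^ k * 2⁻¹ ^ k = 1 := by
    rw [← mul_pow]
    norm_num
  push_cast
  calc (k : ℝ≥0) = k * (2 ^ k * 2⁻¹ ^ k) := by rw [h1, mul_one]
    _ = 2 ^ k * k * 2⁻¹ ^ k := by ring
    _ ≤ (2 ^ k * k + 1) * 2⁻¹ ^ k := by
        exact mul_le_mul_left le_self_add _

lemma adl_seqk_ge (k : ℕ) : (k : ℝ≥0∞) ≤ adl (seqk k) := by
  have hwt : ∀ n ∈ Finset.Icc k (k + 2 ^ k * k),
      MD.wt (seqk k (n + 1)) = 2⁻¹ ^ k := by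
    intro n hn
    rw [Finset.mem_Icc] at hn
    rw [seqk_late k (n+1) (by omega) (by omega), wt_single]
  calc (k : ℝ≥0∞)
      ≤ ((((2 ^ k * k + 1 : ℕ) : ℝ≥0) * 2⁻¹ ^ k : ℝ≥0) : ℝ≥0∞) := by
        rw [← ENNReal.coe_natCast k]
        exact ENNReal.coe_le_coe.2 (nnreal_k_le k)
    _ = ∑ n ∈ Finset.Icc k (k + 2 ^ k * k), ((MD.wt (seqk k (n+1)) : ℝ≥0) : ℝ≥0∞) := by
        rw [← ENNReal.coe_finset_sum]
        congr 1
        rw [Finset.sum_congr rfl hwt, Finset.sum_const, Nat.card_Icc]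
        have : k + 2 ^ k * k + 1 - k = 2 ^ k * k + 1 := by omega
        rw [this, nsmul_eq_mul]
    _ ≤ adl (seqk k) := ENNReal.sum_le_tsum _

lemma adh_top : adh P (Sum.inr 0) = ⊤ := by
  rw [eq_top_iff, ← ENNReal.iSup_natCast]
  apply iSup_le
  intro k
  calc (k : ℝ≥0∞) ≤ adl (seqk k) := adl_seqk_ge hP k
    _ ≤ adh P (Sum.inr 0) :=
      le_iSup₂_of_le (seqk k) ⟨seqk_zero k, seqk_red hP k⟩ le_rfl

end Two

/-- a finitely branching PARS (over `ℕ ⊎ {a_n | n ∈ ℕ}`, with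
`Sum.inl k` the number `k` and `Sum.inr n` the element `a_n`) that is PAST
but not SAST: `adh(a_0) = ∞`. -/
theorem stmt_9 (P : PARS (ℕ ⊕ ℕ))
    (hP : ∀ (a : ℕ ⊕ ℕ) (d : FinDist (ℕ ⊕ ℕ)), P a d ↔
      (∃ n : ℕ, a = Sum.inr n ∧ ∀ y, d.w y =
        if y = Sum.inr (n + 1) then 1 / 2 else if y = Sum.inl 0 then 1 / 2 else 0) ∨
      (∃ n : ℕ, a = Sum.inr n ∧ ∀ y, d.w y =
        if y = Sum.inl (2 ^ n * n) then 1 else 0) ∨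
      (∃ n : ℕ, a = Sum.inl (n + 1) ∧ ∀ y, d.w y =
        if y = Sum.inl n then 1 else 0)) :
    (∀ (a : ℕ ⊕ ℕ) (μs : ℕ → MD (ℕ ⊕ ℕ)),
        P.RedSeqFrom {(1, a)} μs → adl μs < ⊤) ∧
    (∀ a : ℕ ⊕ ℕ, {d | P a d}.Finite) ∧
    ¬ P.SAST ∧ adh P (Sum.inr 0) = ⊤ := by
  refine ⟨?_, ?_, ?_, ?_⟩
  · rintro a μs ⟨h0, hred⟩
    exact past_adl hP hred a h0
  · exact branch_finite hP
  · intro h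
    have hlt := h (Sum.inr 0)
    rw [adh_top hP] at hlt
    exact lt_irrefl _ hlt
  · exact adh_top hP
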